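/- For α ∈ (0,2], α ≠ 1, and u ∈ ℝ, one has |u|^α(1 − i·sgn(u)·tan(πα/2)) = (−iu)^α / cos(πα/2), where (−iu)^α denotes the principal complex power with branch cut along the negative real axis. -/

import Mathlib

open Real Complex

lemma cpow_of_abs_arg {z : ℂ} {r θ : ℝ} (hr : 0 < r) (habs : ‖z‖ = r)
    (harg : z.arg = θ) (α : ℝ) :
    z ^ (α : ℂ) = ((r ^ α : ℝ) : ℂ) * (Real.cos (α * θ) + Real.sin (α * θ) * Complex.I) := by
  have hz : z ≠ 0 := by
    intro h; rw [h] at habs; simp at habs; exact hr.ne habs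
  rw [Complex.cpow_def_of_ne_zero hz, Complex.log, habs, harg]
  have : ((Real.log r : ℂ) + θ * Complex.I) * α
      = (↑(Real.log r * α) : ℂ) + (↑(α * θ) : ℝ) * Complex.I := by
    push_cast; ring
  rw [this, Complex.exp_add, Complex.exp_mul_I,
    Real.rpow_def_of_pos hr, Complex.ofReal_exp, Complex.ofReal_cos, Complex.ofReal_sin]

/-- For `α ∈ (0,2]`, `α ≠ 1`, and real `u`:
`|u|^α (1 − i·sgn(u)·tan(πα/2)) = (−iu)^α / cos(πα/2)`,
with the principal complex power (branch cut along `(−∞,0]`). -/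
theorem nuAlpha_eq_cpow {α : ℝ} (hα0 : 0 < α) (hα2 : α ≤ 2) (hα1 : α ≠ 1) (u : ℝ) :
    ((|u| ^ α : ℝ) : ℂ) *
        (1 - Complex.I * (Real.sign u : ℝ) * (Real.tan (Real.pi * α / 2) : ℝ)) =
      (-(Complex.I * (u : ℂ))) ^ (α : ℂ) / ((Real.cos (Real.pi * α / 2) : ℝ) : ℂ) := by
  have hπ := Real.pi_pos
  have hcos : Real.cos (Real.pi * α / 2) ≠ 0 := by
    rw [Real.cos_ne_zero_iff]
    intro k hk
    have hπne : Real.pi ≠ 0 := hπ.ne'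
    have hkα : α = 2 * (k : ℝ) + 1 := by
      field_simp at hk
      nlinarith [hk]
    rcases lt_trichotomy k 0 with h | h | h
    · have h1 : k ≤ -1 := by omega
      have : (k : ℝ) ≤ -1 := by exact_mod_cast h1
      linarith
    · exact hα1 (by rw [hkα, h]; norm_num)
    · have h1 : (1:ℤ) ≤ k := by omega
      have : (1 : ℝ) ≤ (k : ℝ) := by exact_mod_cast h1
      linarith
  have hcosC : ((Real.cos (Real.pi * α / 2) : ℝ) : ℂ) ≠ 0 := by exact_mod_cast hcos
  have ht : ((Real.tan (Real.pi * α / 2) : ℝ) : ℂ) * ((Real.cos (Real.pi * α / 2) : ℝ) : ℂ)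
      = ((Real.sin (Real.pi * α / 2) : ℝ) : ℂ) := by
    rw [← Complex.ofReal_mul, Real.tan_mul_cos hcos]
  rcases lt_trichotomy u 0 with hu | hu | hu
  · have habs : ‖(-(Complex.I * u))‖ = -u := by
      simp [abs_of_neg hu]
    have harg : (-(Complex.I * u)).arg = Real.pi / 2 := by
      have : (-(Complex.I * (u:ℂ))) = ((-u : ℝ) : ℂ) * Complex.I := by push_cast; ring
      rw [this, Complex.arg_real_mul _ (by linarith : (0:ℝ) < -u), Complex.arg_I]
    rw [cpow_of_abs_arg (by linarith : (0:ℝ) < -u) habs harg α, Real.sign_of_neg hu,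
      abs_of_neg hu]
    have h1 : α * (Real.pi / 2) = Real.pi * α / 2 := by ring
    rw [h1, eq_div_iff hcosC]
    push_cast at ht ⊢
    linear_combination (((-u : ℝ) ^ α : ℝ) : ℂ) * Complex.I * ht
  · simp [hu, Real.zero_rpow hα0.ne', Complex.zero_cpow (by exact_mod_cast hα0.ne' : (α:ℂ) ≠ 0)]
  · have habs : ‖(-(Complex.I * u))‖ = u := by
      simp [abs_of_pos hu]
    have harg : (-(Complex.I * u)).arg = -(Real.pi / 2) := by
      have : (-(Complex.I * (u:ℂ))) = ((u : ℝ) : ℂ) * (-Complex.I) := by push_cast; ring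
      rw [this, Complex.arg_real_mul _ hu, Complex.arg_neg_I]
    rw [cpow_of_abs_arg hu habs harg α, Real.sign_of_pos hu, abs_of_pos hu]
    have h1 : α * -(Real.pi / 2) = -(Real.pi * α / 2) := by ring
    rw [h1, Real.cos_neg, Real.sin_neg, eq_div_iff hcosC]
    push_cast at ht ⊢
    linear_combination (-(((u : ℝ) ^ α : ℝ) : ℂ)) * Complex.I * ht
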